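/- Assume m ≥ 2. Let x^{(0)} ∈ range(Aᴴ) and for k ≥ 0 define the MWRK iterate x^{(k+1)} = x^{(k)} + ((b_{i_k} − A_{i_k,:} x^{(k)})/‖A_{i_k,:}‖₂²)·(A_{i_k,:})ᴴ, where i_k is an index maximizing ψ_i(x^{(k)}) over i ∈ {1,…,m}. Then for every k ≥ 0, ‖x^{(k+1)} − x_*‖₂² ≤ (1 − σ_r(A)²/γ̃)^k · (1 − σ_r(A)²/‖A‖_F²) · ‖x^{(0)} − x_*‖₂², where γ̃ = max_{i∈{1,…,m}} Σ_{j≠i} ‖A_{j,:}‖₂². -/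

import Mathlib

open Matrix Finset

noncomputable section

/-- Squared Euclidean norm `‖v‖₂²` of a complex vector. -/
def vecNormSq {k : ℕ} (v : Fin k → ℂ) : ℝ := ∑ i, ‖v i‖ ^ 2

variable {m n : ℕ}

/-- Squared Euclidean norm `‖A_{i,:}‖₂²` of the `i`-th row of `A`. -/
def rowNormSq (A : Matrix (Fin m) (Fin n) ℂ) (i : Fin m) : ℝ := ∑ j, ‖A i j‖ ^ 2

/-- Squared Frobenius norm `‖A‖_F²`. -/
def frobSq (A : Matrix (Fin m) (Fin n) ℂ) : ℝ := ∑ i, ∑ j, ‖A i j‖ ^ 2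

/-- `ψ_i(x) = |b_i − A_{i,:} x|² / ‖A_{i,:}‖₂²`. -/
def psi (A : Matrix (Fin m) (Fin n) ℂ) (b : Fin m → ℂ) (x : Fin n → ℂ) (i : Fin m) : ℝ :=
  ‖b i - A.mulVec x i‖ ^ 2 / rowNormSq A i

/-- `max_{i ∈ [m]} ψ_i(x)`. -/
def psiMax (A : Matrix (Fin m) (Fin n) ℂ) (b : Fin m → ℂ) (x : Fin n → ℂ) : ℝ :=
  ⨆ i, psi A b x i

/-- The row submatrix `A_{S,:}` of `A`, realized by replacing the rows outside `S` with zero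
(which changes neither the Frobenius norm nor the largest singular value). -/
def rowSub (A : Matrix (Fin m) (Fin n) ℂ) (S : Finset (Fin m)) : Matrix (Fin m) (Fin n) ℂ :=
  fun i j => if i ∈ S then A i j else 0

/-- `σ_r(A)²` : the smallest nonzero eigenvalue of `AᴴA`. -/
def sigmaRSq (A : Matrix (Fin m) (Fin n) ℂ) : ℝ :=
  sInf {μ : ℝ | μ ≠ 0 ∧ ∃ i, (Matrix.isHermitian_conjTranspose_mul_self A).eigenvalues i = μ}

/-- `σ₁(M)²` : the largest eigenvalue of `MᴴM`, i.e. the largest singular value squared. -/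
def sigma1Sq {k : Type*} [Fintype k] (M : Matrix k (Fin n) ℂ) : ℝ :=
  ⨆ i, (Matrix.isHermitian_conjTranspose_mul_self M).eigenvalues i

/-- `Û(x) = {i ∈ [m] : ψ_i(x) ≠ 0}`. -/
def Uhat (A : Matrix (Fin m) (Fin n) ℂ) (b : Fin m → ℂ) (x : Fin n → ℂ) : Finset (Fin m) :=
  Finset.univ.filter fun i => psi A b x i ≠ 0

/-- The greedy index set `U(x)` with relaxation parameter `θ = 1/2`. -/
def Ugreedy (A : Matrix (Fin m) (Fin n) ℂ) (b : Fin m → ℂ) (x : Fin n → ℂ) : Finset (Fin m) :=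
  Finset.univ.filter fun i =>
    (1 / 2) * psiMax A b x + (1 / 2) * (vecNormSq (b - A.mulVec x) / frobSq A) ≤ psi A b x i

/-- `η(x) = Σ_{i ∈ U(x)} (b_i − A_{i,:}x) e_i`. -/
def eta (A : Matrix (Fin m) (Fin n) ℂ) (b : Fin m → ℂ) (x : Fin n → ℂ) : Fin m → ℂ :=
  fun i => if i ∈ Ugreedy A b x then b i - A.mulVec x i else 0

/-- `uᴴ v`, the conjugate dot product. -/
def dotc {k : ℕ} (u v : Fin k → ℂ) : ℂ := ∑ i, (starRingEnd ℂ) (u i) * v i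

/-- `φ(x, η) = |ηᴴ(b − A x)|² / ‖Aᴴ η‖₂²`. -/
def phi (A : Matrix (Fin m) (Fin n) ℂ) (b : Fin m → ℂ) (x : Fin n → ℂ) (η : Fin m → ℂ) : ℝ :=
  ‖dotc η (b - A.mulVec x)‖ ^ 2 / vecNormSq (Aᴴ.mulVec η)

end


namespace MWRK

open Matrix Finset

variable {m n : ℕ}

lemma vecNormSq_nonneg {k : ℕ} (v : Fin k → ℂ) : 0 ≤ vecNormSq v :=
  Finset.sum_nonneg fun i _ => by positivity

lemma vecNormSq_eq_zero {k : ℕ} {v : Fin k → ℂ} (h : vecNormSq v = 0) : v = 0 := by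
  funext i
  have h1 : ∀ j ∈ Finset.univ, (0:ℝ) ≤ ‖v j‖ ^ 2 := fun j _ => by positivity
  have := (Finset.sum_eq_zero_iff_of_nonneg h1).mp h i (Finset.mem_univ i)
  simpa using this

lemma norm_sq_eq_normSq (z : ℂ) : ‖z‖ ^ 2 = Complex.normSq z := by
  rw [Complex.sq_norm]

lemma dotc_self_re {k : ℕ} (v : Fin k → ℂ) : (dotc v v).re = vecNormSq v := by
  rw [dotc, Complex.re_sum]
  refine Finset.sum_congr rfl fun i _ => ?_
  rw [mul_comm, Complex.mul_conj]
  rw [Complex.ofReal_re, ← Complex.sq_norm]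

lemma dotc_comm {k : ℕ} (u v : Fin k → ℂ) : dotc u v = (starRingEnd ℂ) (dotc v u) := by
  rw [dotc, dotc, map_sum]
  refine Finset.sum_congr rfl fun i _ => ?_
  simp [mul_comm]

lemma dotc_mulVec (M : Matrix (Fin m) (Fin n) ℂ) (u : Fin m → ℂ) (v : Fin n → ℂ) :
    dotc u (M.mulVec v) = dotc (Mᴴ.mulVec u) v := by
  simp only [dotc, Matrix.mulVec, dotProduct, Matrix.conjTranspose_apply,
    Finset.mul_sum, Finset.sum_mul, map_sum, _root_.map_mul, Complex.conj_conj]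
  rw [Finset.sum_comm]
  refine Finset.sum_congr rfl fun j _ => Finset.sum_congr rfl fun i _ => ?_
  simp only [RingHom.coe_coe, starRingEnd_apply, star_star]
  ring

lemma dotc_eq_inner {k : ℕ} (u v : EuclideanSpace ℂ (Fin k)) :
    dotc (u : Fin k → ℂ) v = inner ℂ u v := by
  rw [PiLp.inner_apply, dotc]
  exact Finset.sum_congr rfl fun i _ => by simp [RCLike.inner_apply, mul_comm]

lemma dotc_smul_left {k : ℕ} (c : ℂ) (u v : Fin k → ℂ) :
    dotc (c • u) v = (starRingEnd ℂ) c * dotc u v := by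
  simp [dotc, Finset.mul_sum, mul_assoc]

lemma dotc_sum_left {k : ℕ} {ι : Type*} (s : Finset ι) (f : ι → (Fin k → ℂ)) (v : Fin k → ℂ) :
    dotc (∑ i ∈ s, f i) v = ∑ i ∈ s, dotc (f i) v := by
  simp only [dotc, Finset.sum_apply, map_sum, Finset.sum_mul]
  exact Finset.sum_comm

lemma dotc_zero_left {k : ℕ} (v : Fin k → ℂ) : dotc 0 v = 0 := by simp [dotc]

lemma rowNormSq_pos (A : Matrix (Fin m) (Fin n) ℂ) (hA : ∀ i, A i ≠ 0) (i : Fin m) :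
    0 < rowNormSq A i := by
  obtain ⟨j, hj⟩ := Function.ne_iff.mp (hA i)
  have h1 : (0:ℝ) < ‖A i j‖ ^ 2 := by have := norm_pos_iff.mpr hj; positivity
  have h2 : ‖A i j‖ ^ 2 ≤ rowNormSq A i :=
    Finset.single_le_sum (f := fun j => ‖A i j‖ ^ 2) (fun _ _ => by positivity) (Finset.mem_univ j)
  linarith

lemma frobSq_eq_sum (A : Matrix (Fin m) (Fin n) ℂ) : frobSq A = ∑ i, rowNormSq A i := rfl

lemma psi_nonneg (A : Matrix (Fin m) (Fin n) ℂ) (b : Fin m → ℂ) (u : Fin n → ℂ) (i : Fin m) :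
    0 ≤ psi A b u i := by
  rw [psi]
  exact div_nonneg (by positivity)
    (Finset.sum_nonneg fun j _ => by positivity : (0:ℝ) ≤ rowNormSq A i)

def toE {k : ℕ} (v : Fin k → ℂ) : EuclideanSpace ℂ (Fin k) := WithLp.toLp 2 v

lemma vecNormSq_toE {k : ℕ} (v : Fin k → ℂ) : vecNormSq v = ‖toE v‖ ^ 2 := by
  rw [EuclideanSpace.norm_eq, Real.sq_sqrt (by positivity)]; rfl

lemma repr_toE {k : ℕ} (B : OrthonormalBasis (Fin k) ℂ (EuclideanSpace ℂ (Fin k)))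
    (v : Fin k → ℂ) (i : Fin k) : B.repr (toE v) i = dotc (⇑(B i)) v := by
  rw [B.repr_apply_apply, ← dotc_eq_inner]; rfl

lemma parseval_toE {k : ℕ} (B : OrthonormalBasis (Fin k) ℂ (EuclideanSpace ℂ (Fin k)))
    (v : Fin k → ℂ) : vecNormSq v = ∑ i, ‖dotc (⇑(B i)) v‖ ^ 2 := by
  rw [vecNormSq_toE, ← B.repr.norm_map (toE v), EuclideanSpace.norm_eq,
    Real.sq_sqrt (by positivity)]
  exact Finset.sum_congr rfl fun i _ => by rw [repr_toE]

section Spectral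
variable (A : Matrix (Fin m) (Fin n) ℂ)

lemma eigen_mulVec (i : Fin n) :
    (Aᴴ * A) *ᵥ ⇑((Matrix.isHermitian_conjTranspose_mul_self A).eigenvectorBasis i)
      = (((Matrix.isHermitian_conjTranspose_mul_self A).eigenvalues i : ℂ))
          • ⇑((Matrix.isHermitian_conjTranspose_mul_self A).eigenvectorBasis i) := by
  rw [(Matrix.isHermitian_conjTranspose_mul_self A).mulVec_eigenvectorBasis i]
  ext j; simp [Complex.real_smul]

/-- `‖A u‖² = re ⟪(AᴴA)u, u⟫` -/
lemma vecNormSq_mulVec_eq (u : Fin n → ℂ) :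
    vecNormSq (A *ᵥ u) = (dotc ((Aᴴ * A) *ᵥ u) u).re := by
  have h1 : dotc (A *ᵥ u) (A *ᵥ u) = dotc ((Aᴴ * A) *ᵥ u) (u) := by
    rw [dotc_mulVec A (A *ᵥ u) u, Matrix.mulVec_mulVec]
  rw [← h1, dotc_self_re]

lemma A_mulVec_eigenvector_eq_zero (i : Fin n)
    (h : (Matrix.isHermitian_conjTranspose_mul_self A).eigenvalues i = 0) :
    A *ᵥ ⇑((Matrix.isHermitian_conjTranspose_mul_self A).eigenvectorBasis i) = 0 := by
  apply vecNormSq_eq_zero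
  rw [vecNormSq_mulVec_eq, eigen_mulVec, h]
  norm_num [dotc_smul_left, dotc_zero_left]

lemma eigen_coeff_zero (i : Fin n) (y : Fin m → ℂ)
    (h : (Matrix.isHermitian_conjTranspose_mul_self A).eigenvalues i = 0) :
    dotc (⇑((Matrix.isHermitian_conjTranspose_mul_self A).eigenvectorBasis i)) (Aᴴ *ᵥ y) = 0 := by
  rw [dotc_mulVec Aᴴ _ y, Matrix.conjTranspose_conjTranspose,
    A_mulVec_eigenvector_eq_zero A i h, dotc_zero_left]

lemma sigma_le_of_ne_zero {i : Fin n}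
    (h : (Matrix.isHermitian_conjTranspose_mul_self A).eigenvalues i ≠ 0) :
    sigmaRSq A ≤ (Matrix.isHermitian_conjTranspose_mul_self A).eigenvalues i := by
  have hfin : ({μ : ℝ | μ ≠ 0 ∧
      ∃ j, (Matrix.isHermitian_conjTranspose_mul_self A).eigenvalues j = μ}).Finite :=
    (Set.finite_range (Matrix.isHermitian_conjTranspose_mul_self A).eigenvalues).subset
      (fun μ hμ => hμ.2.imp fun j hj => hj)
  exact csInf_le hfin.bddBelow ⟨h, i, rfl⟩

lemma spectral_lb (v : Fin n → ℂ) (y : Fin m → ℂ) (hv : v = Aᴴ *ᵥ y) :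
    sigmaRSq A * vecNormSq v ≤ vecNormSq (A *ᵥ v) := by
  classical
  set hH := Matrix.isHermitian_conjTranspose_mul_self A with hHdef
  set B := hH.eigenvectorBasis with hB
  set lam := hH.eigenvalues with hlamdef
  set c : Fin n → ℂ := fun i => dotc (⇑(B i)) v with hc
  have hexp : v = ∑ i, c i • ⇑(B i) := by
    have h := (B.sum_repr (toE v)).symm
    funext j
    have h2 : v j = (∑ i, B.repr (toE v) i • B i : EuclideanSpace ℂ (Fin n)) j := congrFun (congrArg WithLp.ofLp h) j
    rw [h2, WithLp.ofLp_sum, Finset.sum_apply, Finset.sum_apply]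
    refine Finset.sum_congr rfl fun i _ => ?_
    rw [repr_toE]
    rfl
  have hMv : (Aᴴ * A) *ᵥ v = ∑ i, (c i * (lam i : ℂ)) • ⇑(B i) := by
    conv_lhs => rw [hexp]
    rw [show ((Aᴴ * A) *ᵥ (∑ i, c i • ⇑(B i))) = (Aᴴ * A).mulVecLin (∑ i, c i • ⇑(B i)) from rfl,
      map_sum]
    refine Finset.sum_congr rfl fun i _ => ?_
    rw [_root_.map_smul]
    show c i • ((Aᴴ * A) *ᵥ ⇑(B i)) = _
    rw [eigen_mulVec A i, smul_smul]
  have hAv : vecNormSq (A *ᵥ v) = ∑ i, lam i * ‖c i‖ ^ 2 := by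
    rw [vecNormSq_mulVec_eq, hMv, dotc_sum_left, Complex.re_sum]
    refine Finset.sum_congr rfl fun i _ => ?_
    have h1 : dotc (⇑(B i)) v = c i := rfl
    rw [dotc_smul_left, h1, _root_.map_mul, Complex.conj_ofReal]
    have h3 : (starRingEnd ℂ) (c i) * (lam i : ℂ) * c i
        = (lam i : ℂ) * (c i * (starRingEnd ℂ) (c i)) := by ring
    rw [h3, Complex.mul_conj, ← Complex.ofReal_mul, Complex.ofReal_re, Complex.normSq_eq_norm_sq]
  rw [parseval_toE B v, hAv, Finset.mul_sum]
  refine Finset.sum_le_sum fun i _ => ?_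
  by_cases hci : c i = 0
  · have e : dotc (⇑(B i)) v = c i := rfl
    rw [e, hci]
    simp
  · have hlam0 : lam i ≠ 0 := by
      intro h0
      apply hci
      have e : c i = dotc (⇑(B i)) v := rfl
      rw [e, hv]
      exact eigen_coeff_zero A i y h0
    have e : dotc (⇑(B i)) v = c i := rfl
    rw [e]
    exact mul_le_mul_of_nonneg_right (sigma_le_of_ne_zero A hlam0) (by positivity)

lemma sum_eigenvalues_eq :
    ∑ i, (Matrix.isHermitian_conjTranspose_mul_self A).eigenvalues i = frobSq A := by
  classical
  set hH := Matrix.isHermitian_conjTranspose_mul_self A with hHdef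
  set B := hH.eigenvectorBasis with hB
  have hnorm1 : ∀ i, vecNormSq (⇑(B i)) = 1 := by
    intro i
    have h := vecNormSq_toE (⇑(B i))
    have h2 : ‖toE (⇑(B i))‖ = ‖B i‖ := rfl
    rw [h2, B.orthonormal.1 i, one_pow] at h
    exact h
  have hlam : ∀ i, hH.eigenvalues i = vecNormSq (A *ᵥ ⇑(B i)) := by
    intro i
    rw [vecNormSq_mulVec_eq, eigen_mulVec, dotc_smul_left, Complex.conj_ofReal,
      Complex.re_ofReal_mul, dotc_self_re, hnorm1 i, mul_one]
  have hpars : ∀ j : Fin m, ∑ i, ‖(A *ᵥ ⇑(B i)) j‖ ^ 2 = rowNormSq A j := by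
    intro j
    have e1 : ∀ i, ‖(A *ᵥ ⇑(B i)) j‖ = ‖dotc (⇑(B i)) (star (A j))‖ := by
      intro i
      have hrow : (A *ᵥ ⇑(B i)) j = dotc (star (A j)) (⇑(B i)) := by
        simp only [dotc, Matrix.mulVec, dotProduct, Pi.star_apply, starRingEnd_apply,
          star_star]
      rw [hrow, dotc_comm]
      exact RCLike.norm_conj _
    have e2 : ∑ i, ‖(A *ᵥ ⇑(B i)) j‖ ^ 2 = ∑ i, ‖dotc (⇑(B i)) (star (A j))‖ ^ 2 :=
      Finset.sum_congr rfl fun i _ => by rw [e1 i]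
    rw [e2, ← parseval_toE B (star (A j))]
    unfold vecNormSq rowNormSq
    exact Finset.sum_congr rfl fun l _ => by rw [Pi.star_apply, norm_star]
  calc ∑ i, hH.eigenvalues i = ∑ i, ∑ j, ‖(A *ᵥ ⇑(B i)) j‖ ^ 2 :=
        Finset.sum_congr rfl fun i _ => hlam i
    _ = ∑ j, ∑ i, ‖(A *ᵥ ⇑(B i)) j‖ ^ 2 := Finset.sum_comm
    _ = ∑ j, rowNormSq A j := Finset.sum_congr rfl fun j _ => hpars j
    _ = frobSq A := rfl

end Spectral

lemma step_eq (A : Matrix (Fin m) (Fin n) ℂ) (b : Fin m → ℂ) (xs u : Fin n → ℂ)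
    (hxs : A *ᵥ xs = b) (i : Fin m) (hρ : rowNormSq A i ≠ 0) :
    vecNormSq (u + ((b i - A.mulVec u i) / (rowNormSq A i : ℂ)) • star (A i) - xs)
      = vecNormSq (u - xs) - ‖b i - A.mulVec u i‖ ^ 2 / rowNormSq A i := by
  set ρ : ℝ := rowNormSq A i with hρdef
  set r : ℂ := b i - A.mulVec u i with hrdef
  set e : Fin n → ℂ := u - xs with hedef
  have hvec : u + (r / (ρ:ℂ)) • star (A i) - xs
      = fun j => e j + (r / (ρ:ℂ)) * (starRingEnd ℂ) (A i j) := by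
    funext j
    simp only [hedef, Pi.add_apply, Pi.sub_apply, Pi.smul_apply, Pi.star_apply, smul_eq_mul,
      starRingEnd_apply]
    ring
  rw [hvec]
  have hterm : ∀ j, ‖e j + (r / (ρ:ℂ)) * (starRingEnd ℂ) (A i j)‖ ^ 2
      = ‖e j‖ ^ 2 + (Complex.normSq r / ρ ^ 2) * ‖A i j‖ ^ 2
        + 2 * ((starRingEnd ℂ) (r / (ρ:ℂ)) * (A i j * e j)).re := by
    intro j
    rw [norm_sq_eq_normSq, Complex.normSq_add, norm_sq_eq_normSq, norm_sq_eq_normSq]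
    congr 1
    · congr 1
      rw [Complex.normSq_mul, Complex.normSq_conj, Complex.normSq_div]
      rw [Complex.normSq_ofReal]
      ring
    · congr 1
      rw [_root_.map_mul, Complex.conj_conj]
      ring_nf
  have hsum : vecNormSq (fun j => e j + (r / (ρ:ℂ)) * (starRingEnd ℂ) (A i j))
      = vecNormSq e + (Complex.normSq r / ρ ^ 2) * ρ
        + 2 * ((starRingEnd ℂ) (r / (ρ:ℂ)) * ∑ j, A i j * e j).re := by
    have hρsum : ∑ j, ‖A i j‖ ^ 2 = ρ := rfl
    have h3 : ∑ j, 2 * ((starRingEnd ℂ) (r / (ρ:ℂ)) * (A i j * e j)).re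
        = 2 * ((starRingEnd ℂ) (r / (ρ:ℂ)) * ∑ j, A i j * e j).re := by
      rw [Finset.mul_sum, Complex.re_sum, Finset.mul_sum]
    unfold vecNormSq
    rw [Finset.sum_congr rfl fun j _ => hterm j, Finset.sum_add_distrib, Finset.sum_add_distrib,
      ← Finset.mul_sum, hρsum, h3]
  rw [hsum]
  have hres : ∑ j, A i j * e j = -r := by
    have h1 : ∑ j, A i j * e j = A.mulVec u i - A.mulVec xs i := by
      simp only [hedef, Matrix.mulVec, dotProduct, Pi.sub_apply, mul_sub,
        Finset.sum_sub_distrib]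
    rw [h1, hxs, hrdef]
    ring
  rw [hres]
  have hre : ((starRingEnd ℂ) (r / (ρ:ℂ)) * -r).re = -(Complex.normSq r / ρ) := by
    rw [map_div₀, Complex.conj_ofReal, div_mul_eq_mul_div, mul_neg,
      mul_comm ((starRingEnd ℂ) r) r, Complex.mul_conj, neg_div, ← Complex.ofReal_div,
      ← Complex.ofReal_neg, Complex.ofReal_re]
  rw [hre, norm_sq_eq_normSq]
  field_simp
  ring

lemma residual_after (A : Matrix (Fin m) (Fin n) ℂ) (b : Fin m → ℂ) (u : Fin n → ℂ) (i : Fin m)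
    (hρ : rowNormSq A i ≠ 0) :
    b i - A.mulVec (u + ((b i - A.mulVec u i) / (rowNormSq A i : ℂ)) • star (A i)) i = 0 := by
  rw [Matrix.mulVec_add, Matrix.mulVec_smul]
  have h1 : (A *ᵥ star (A i)) i = ((rowNormSq A i : ℝ) : ℂ) := by
    simp only [Matrix.mulVec, dotProduct, Pi.star_apply]
    rw [rowNormSq, Complex.ofReal_sum]
    refine Finset.sum_congr rfl fun j _ => ?_
    rw [norm_sq_eq_normSq, ← Complex.mul_conj]
    rfl
  have hρC : ((rowNormSq A i : ℝ) : ℂ) ≠ 0 := Complex.ofReal_ne_zero.mpr hρ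
  rw [Pi.add_apply, Pi.smul_apply, h1, smul_eq_mul, div_mul_cancel₀ _ hρC]
  ring

lemma star_row_eq (A : Matrix (Fin m) (Fin n) ℂ) (i : Fin m) :
    star (A i) = Aᴴ *ᵥ Pi.single i 1 := by
  funext j
  simp only [Pi.star_apply, Matrix.mulVec, dotProduct, Matrix.conjTranspose_apply,
    Pi.single_apply, mul_ite, mul_one, mul_zero, Finset.sum_ite_eq', Finset.mem_univ, if_true]

lemma vecNormSq_sub_comm {k : ℕ} (u v : Fin k → ℂ) :
    vecNormSq (u - v) = vecNormSq (v - u) := by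
  unfold vecNormSq
  refine Finset.sum_congr rfl fun i _ => ?_
  rw [Pi.sub_apply, Pi.sub_apply, norm_sub_rev]

lemma res_bound (A : Matrix (Fin m) (Fin n) ℂ) (b : Fin m → ℂ) (u : Fin n → ℂ)
    (hA : ∀ i, A i ≠ 0) (t : ℝ) (ht : ∀ i, psi A b u i ≤ t)
    (S : Finset (Fin m)) (hS : ∀ i ∉ S, b i - A.mulVec u i = 0) :
    vecNormSq (fun i => b i - A.mulVec u i) ≤ t * ∑ i ∈ S, rowNormSq A i := by
  unfold vecNormSq
  have hzero : ∀ i ∈ Finset.univ, i ∉ S → ‖b i - A.mulVec u i‖ ^ 2 = 0 := by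
    intro i _ hi
    rw [hS i hi, norm_zero]
    norm_num
  rw [← Finset.sum_subset (Finset.subset_univ S) hzero, Finset.mul_sum]
  refine Finset.sum_le_sum fun i _ => ?_
  have h1 : ‖b i - A.mulVec u i‖ ^ 2 = psi A b u i * rowNormSq A i := by
    rw [psi, div_mul_cancel₀]
    exact (rowNormSq_pos A hA i).ne'
  rw [h1]
  exact mul_le_mul_of_nonneg_right (ht i) (rowNormSq_pos A hA i).le

end MWRK

/-- Theorem 2.1, MWRK convergence: for `m ≥ 2`, `x⁰ ∈ range(Aᴴ)`, and MWRK
iterates `x^{k+1} = x^k + ((b_{i_k} − A_{i_k,:}x^k)/‖A_{i_k,:}‖₂²)(A_{i_k,:})ᴴ` with `i_k`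
maximizing `ψ_i(x^k)`, one has for every `k ≥ 0`
`‖x^{k+1} − x_*‖₂² ≤ (1 − σ_r(A)²/γ̃)^k (1 − σ_r(A)²/‖A‖_F²) ‖x⁰ − x_*‖₂²`,
where `γ̃ = max_i Σ_{j ≠ i} ‖A_{j,:}‖₂²`. -/
theorem stmt3 {m n : ℕ} (hm : 2 ≤ m) (A : Matrix (Fin m) (Fin n) ℂ) (b : Fin m → ℂ)
    (hA : ∀ i, A i ≠ 0)
    (xs : Fin n → ℂ) (hxs1 : A.mulVec xs = b) (hxs2 : ∃ y, xs = Aᴴ.mulVec y)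
    (x : ℕ → Fin n → ℂ) (idx : ℕ → Fin m)
    (hx0 : ∃ y, x 0 = Aᴴ.mulVec y)
    (hidx : ∀ k, ∀ i, psi A b (x k) i ≤ psi A b (x k) (idx k))
    (hit : ∀ k,
      x (k + 1) = x k
        + ((b (idx k) - A.mulVec (x k) (idx k)) / (rowNormSq A (idx k) : ℂ)) • star (A (idx k)))
    (k : ℕ) :
    vecNormSq (x (k + 1) - xs) ≤
      (1 - sigmaRSq A / (⨆ i : Fin m, ∑ j ∈ Finset.univ.erase i, rowNormSq A j)) ^ k *
        (1 - sigmaRSq A / frobSq A) * vecNormSq (x 0 - xs) := by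
  classical
  have hn : ∀ i, 0 < rowNormSq A i := MWRK.rowNormSq_pos A hA
  have hm0 : 0 < m := lt_of_lt_of_le two_pos hm
  haveI : Nonempty (Fin m) := ⟨⟨0, hm0⟩⟩
  set σ := sigmaRSq A with hσdef
  set F := frobSq A with hFdef
  set γ := ⨆ i : Fin m, ∑ j ∈ Finset.univ.erase i, rowNormSq A j with hγdef
  set E : ℕ → ℝ := fun k => vecNormSq (x k - xs) with hEdef
  have hFpos : 0 < F := by
    rw [hFdef, MWRK.frobSq_eq_sum]
    exact Finset.sum_pos (fun i _ => hn i) Finset.univ_nonempty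
  have hγ_le : ∀ i, ∑ j ∈ Finset.univ.erase i, rowNormSq A j ≤ γ := fun i =>
    le_ciSup (f := fun i : Fin m => ∑ j ∈ Finset.univ.erase i, rowNormSq A j)
      (Set.Finite.bddAbove (Set.finite_range _)) i
  have hγpos : 0 < γ := by
    have h1 : (⟨1, hm⟩ : Fin m) ∈ Finset.univ.erase (⟨0, hm0⟩ : Fin m) := by
      simp [Fin.ext_iff]
    have h2 : rowNormSq A ⟨1, hm⟩ ≤ ∑ j ∈ Finset.univ.erase (⟨0, hm0⟩ : Fin m), rowNormSq A j :=
      Finset.single_le_sum (fun j _ => (hn j).le) h1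
    exact lt_of_lt_of_le (hn _) (h2.trans (hγ_le _))
  have hEnn : ∀ j, 0 ≤ E j := fun j => MWRK.vecNormSq_nonneg _
  have hstep : ∀ j, E (j+1) = E j - psi A b (x j) (idx j) := by
    intro j
    show vecNormSq (x (j+1) - xs) = vecNormSq (x j - xs) - psi A b (x j) (idx j)
    rw [hit j]
    exact MWRK.step_eq A b xs (x j) hxs1 (idx j) (hn _).ne'
  have hrange : ∀ j, ∃ y, xs - x j = Aᴴ *ᵥ y := by
    obtain ⟨ys, hys⟩ := hxs2
    have hxk : ∀ j, ∃ y, x j = Aᴴ *ᵥ y := by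
      intro j
      induction j with
      | zero => exact hx0
      | succ j ih =>
        obtain ⟨y, hy⟩ := ih
        refine ⟨y + ((b (idx j) - A.mulVec (x j) (idx j)) / (rowNormSq A (idx j) : ℂ))
          • (Pi.single (idx j) 1 : Fin m → ℂ), ?_⟩
        rw [hit j, Matrix.mulVec_add, Matrix.mulVec_smul, ← MWRK.star_row_eq, hy]
    intro j
    obtain ⟨y, hy⟩ := hxk j
    exact ⟨ys - y, by rw [Matrix.mulVec_sub, ← hy, ← hys]⟩
  have hres_lb : ∀ j, σ * E j ≤ vecNormSq (fun i => b i - A.mulVec (x j) i) := by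
    intro j
    have hvec : (fun i => b i - A.mulVec (x j) i) = A *ᵥ (xs - x j) := by
      funext i
      rw [Matrix.mulVec_sub, Pi.sub_apply, hxs1]
    rw [hvec]
    obtain ⟨y, hy⟩ := hrange j
    have h2 := MWRK.spectral_lb A (xs - x j) y hy
    have h3 : E j = vecNormSq (xs - x j) := MWRK.vecNormSq_sub_comm _ _
    rw [h3, hσdef]
    exact h2
  have hMaster : ∀ j (W : ℝ), 0 < W →
      vecNormSq (fun i => b i - A.mulVec (x j) i) ≤ psi A b (x j) (idx j) * W →
      E (j+1) ≤ (1 - σ / W) * E j := by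
    intro j W hW hb2
    have h2 : σ * E j / W ≤ psi A b (x j) (idx j) := by
      rw [div_le_iff₀ hW]
      exact le_trans (hres_lb j) hb2
    rw [hstep j]
    have e1 : (1 - σ/W) * E j = E j - σ * E j / W := by ring
    rw [e1]
    linarith
  have hM1 : ∀ j, E (j+1) ≤ (1 - σ / F) * E j := by
    intro j
    refine hMaster j F hFpos ?_
    have h1 := MWRK.res_bound A b (x j) hA (psi A b (x j) (idx j)) (hidx j) Finset.univ
      (fun i hi => absurd (Finset.mem_univ i) hi)
    rwa [← MWRK.frobSq_eq_sum, ← hFdef] at h1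
  have hM2 : ∀ j, E (j+2) ≤ (1 - σ / γ) * E (j+1) := by
    intro j
    refine hMaster (j+1) γ hγpos ?_
    have hsupp : ∀ i ∉ Finset.univ.erase (idx j), b i - A.mulVec (x (j+1)) i = 0 := by
      intro i hi
      have hieq : i = idx j := by simpa using hi
      subst hieq
      rw [hit j]
      exact MWRK.residual_after A b (x j) (idx j) (hn _).ne'
    have h1 := MWRK.res_bound A b (x (j+1)) hA (psi A b (x (j+1)) (idx (j+1))) (hidx (j+1))
      (Finset.univ.erase (idx j)) hsupp
    refine h1.trans ?_
    exact mul_le_mul_of_nonneg_left (hγ_le (idx j)) (MWRK.psi_nonneg A b (x (j+1)) (idx (j+1)))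
  show E (k+1) ≤ (1 - σ/γ)^k * (1 - σ/F) * E 0
  by_cases ha : 0 ≤ 1 - σ/γ
  · induction k with
    | zero => simpa using hM1 0
    | succ k ih =>
      calc E (k+2) ≤ (1-σ/γ) * E (k+1) := hM2 k
        _ ≤ (1-σ/γ) * ((1-σ/γ)^k * (1-σ/F) * E 0) := mul_le_mul_of_nonneg_left ih ha
        _ = (1-σ/γ)^(k+1) * (1-σ/F) * E 0 := by ring
  · push_neg at ha
    have hz : ∀ j, E (j+1) = 0 := by
      intro j
      have h1 := hM2 j
      have h2 := hEnn (j+2)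
      have h3 := hEnn (j+1)
      nlinarith
    have hγσ : γ < σ := by
      by_contra hcon
      push_neg at hcon
      have : σ / γ ≤ 1 := (div_le_one hγpos).mpr hcon
      linarith
    have hσpos : 0 < σ := lt_trans hγpos hγσ
    set lam := (Matrix.isHermitian_conjTranspose_mul_self A).eigenvalues with hlamdef
    have hsumlam : ∑ i, lam i = F := MWRK.sum_eigenvalues_eq A
    have hlam_nn : ∀ i, 0 ≤ lam i := Matrix.eigenvalues_conjTranspose_mul_self_nonneg A
    have hfin : ({μ : ℝ | μ ≠ 0 ∧ ∃ j, lam j = μ}).Finite :=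
      (Set.finite_range lam).subset (fun μ hμ => hμ.2.imp fun j hj => hj)
    have hTne : ({μ : ℝ | μ ≠ 0 ∧ ∃ j, lam j = μ}).Nonempty := by
      by_contra hempty
      rw [Set.not_nonempty_iff_eq_empty] at hempty
      have : σ = 0 := by rw [hσdef, sigmaRSq, show {μ : ℝ | μ ≠ 0 ∧
        ∃ j, (Matrix.isHermitian_conjTranspose_mul_self A).eigenvalues j = μ}
          = (∅ : Set ℝ) from hempty, Real.sInf_empty]
      linarith
    have hmem : σ ∈ {μ : ℝ | μ ≠ 0 ∧ ∃ j, lam j = μ} := hTne.csInf_mem hfin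
    obtain ⟨hσne, i0, hi0⟩ := hmem
    have hσleF : σ ≤ F := by
      rw [← hsumlam, ← hi0]
      exact Finset.single_le_sum (fun i _ => hlam_nn i) (Finset.mem_univ i0)
    have hσF : σ = F := by
      by_contra hne
      have hσlt : σ < F := lt_of_le_of_ne hσleF hne
      have h2 : ∃ i1 ∈ Finset.univ.erase i0, lam i1 ≠ 0 := by
        by_contra hh
        push_neg at hh
        have hz2 : ∑ i ∈ Finset.univ.erase i0, lam i = 0 :=
          Finset.sum_eq_zero (fun i hi => hh i hi)
        have he : ∑ i ∈ Finset.univ.erase i0, lam i = F - lam i0 :=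
          by rw [Finset.sum_erase_eq_sub (Finset.mem_univ i0), hsumlam]
        rw [he, hi0] at hz2
        linarith
      obtain ⟨i1, hi1mem, hi1ne⟩ := h2
      have hi1ne0 : i1 ≠ i0 := Finset.ne_of_mem_erase hi1mem
      have hσle1 : σ ≤ lam i1 := MWRK.sigma_le_of_ne_zero A hi1ne
      have hsum2 : lam i0 + lam i1 ≤ F := by
        rw [← hsumlam]
        calc lam i0 + lam i1 = ∑ i ∈ ({i0, i1} : Finset (Fin n)), lam i :=
              (Finset.sum_pair (Ne.symm hi1ne0)).symm
          _ ≤ ∑ i, lam i := Finset.sum_le_sum_of_subset_of_nonneg (Finset.subset_univ _)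
              (fun i _ _ => hlam_nn i)
      have hrowmin : ∃ i : Fin m, rowNormSq A i ≤ F/2 := by
        by_contra hh
        push_neg at hh
        have h4 : ∀ i ∈ (Finset.univ : Finset (Fin m)), F/2 < rowNormSq A i := fun i _ => hh i
        have h5 := Finset.sum_lt_sum_of_nonempty Finset.univ_nonempty h4
        rw [Finset.sum_const, ← MWRK.frobSq_eq_sum, ← hFdef] at h5
        have h6 : (2:ℝ) ≤ (((Finset.univ : Finset (Fin m)).card : ℕ) : ℝ) := by
          rw [Finset.card_univ, Fintype.card_fin]
          exact_mod_cast hm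
        have h7 : (2:ℝ) * (F/2) ≤ (((Finset.univ : Finset (Fin m)).card : ℕ) : ℝ) * (F/2) :=
          mul_le_mul_of_nonneg_right h6 (by linarith)
        rw [nsmul_eq_mul] at h5
        nlinarith
      obtain ⟨imin, himin⟩ := hrowmin
      have h6 : ∑ j ∈ Finset.univ.erase imin, rowNormSq A j = F - rowNormSq A imin := by
        rw [Finset.sum_erase_eq_sub (Finset.mem_univ imin), ← MWRK.frobSq_eq_sum, ← hFdef]
      have h7 : F/2 ≤ γ := by
        have := hγ_le imin
        rw [h6] at this
        linarith
      linarith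
    rw [hz k, hσF]
    have he : (1 - F/F) = 0 := by
      field_simp
      norm_num
    rw [he]
    simp
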